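/- For an asymptotically stable switched linear system with quadratic cost c(x) = xᵀQx (Q ≻ 0), there exists for each l a family of quadratic functions {V_α^l}_{α ∈ ⟨M⟩^l} satisfying the path-complete inequalities on the dual De Bruijn graph H_l^T(M) such that V^l(x) := max_α V_α^l(x) satisfies (1−η_l)V^l(x) ≤ J(x) ≤ V^l(x) for all x, and hence V^l(x) → J(x) pointwise as l → ∞. -/

import Mathlib

open scoped ENNReal
open Filter Matrix

/-- Trajectory of the switched linear system `x_{k+1} = A_{σ(k)} x_k`. -/
def trajL {n M : ℕ} (A : Fin M → Matrix (Fin n) (Fin n) ℝ)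
    (σ : ℕ → Fin M) (x : Fin n → ℝ) : ℕ → (Fin n → ℝ)
  | 0 => x
  | k + 1 => A (σ k) *ᵥ trajL A σ x k

/-- Quadratic form `xᵀ Q x`. -/
def quadForm {n : ℕ} (Q : Matrix (Fin n) (Fin n) ℝ) (x : Fin n → ℝ) : ℝ :=
  x ⬝ᵥ (Q *ᵥ x)

/-- Extension of a finite word `w ∈ ⟨M⟩^l` to a switching signal `ℕ → ⟨M⟩`
(using `d` beyond time `l`; the truncated cost does not depend on `d`). -/
def wordExt {M l : ℕ} (w : Fin l → Fin M) (d : Fin M) : ℕ → Fin M :=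
  fun k => if h : k < l then w ⟨k, h⟩ else d

/-- Truncated cost `Ṽ_γ(x) = ∑_{k=0}^{l} ξ(k,x,σ_γ)ᵀ Q ξ(k,x,σ_γ)` where `σ_γ`
follows the modes of the word `γ ∈ ⟨M⟩^l`. -/
def truncCost {n M l : ℕ} (A : Fin M → Matrix (Fin n) (Fin n) ℝ)
    (Q : Matrix (Fin n) (Fin n) ℝ) (d : Fin M) (γ : Fin l → Fin M)
    (x : Fin n → ℝ) : ℝ :=
  ∑ k ∈ Finset.range (l + 1), quadForm Q (trajL A (wordExt γ d) x k)

/-- Worst-case value function of the switched linear system with cost `xᵀQx`. -/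
noncomputable def valueFunLin {n M : ℕ} (A : Fin M → Matrix (Fin n) (Fin n) ℝ)
    (Q : Matrix (Fin n) (Fin n) ℝ) (x : Fin n → ℝ) : ℝ≥0∞ :=
  ⨆ σ : ℕ → Fin M, ∑' k : ℕ, ENNReal.ofReal (quadForm Q (trajL A σ x k))

section AuxLemmas

variable {n M : ℕ}

lemma aux_quadForm_nonneg {Q : Matrix (Fin n) (Fin n) ℝ} (hQ : Q.PosSemidef)
    (x : Fin n → ℝ) : 0 ≤ quadForm Q x := by
  have h := hQ.dotProduct_mulVec_nonneg x
  simpa [quadForm] using h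

lemma aux_trajL_congr (A : Fin M → Matrix (Fin n) (Fin n) ℝ)
    {σ σ' : ℕ → Fin M} (x : Fin n → ℝ) :
    ∀ k : ℕ, (∀ i, i < k → σ i = σ' i) → trajL A σ x k = trajL A σ' x k
  | 0, _ => rfl
  | k + 1, h => by
    simp only [trajL, h k (Nat.lt_succ_self k),
      aux_trajL_congr A x k (fun i hi => h i (hi.trans (Nat.lt_succ_self k)))]

lemma aux_trajL_shift (A : Fin M → Matrix (Fin n) (Fin n) ℝ)
    (σ : ℕ → Fin M) (x : Fin n → ℝ) (m : ℕ) :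
    ∀ j : ℕ, trajL A σ x (m + j)
      = trajL A (fun i => σ (m + i)) (trajL A σ x m) j
  | 0 => rfl
  | j + 1 => by
    show trajL A σ x ((m + j) + 1) = _
    simp only [trajL, aux_trajL_shift A σ x m j]

/-- Product of the matrices along a switching signal. -/
def prodMat (A : Fin M → Matrix (Fin n) (Fin n) ℝ) (σ : ℕ → Fin M) :
    ℕ → Matrix (Fin n) (Fin n) ℝ
  | 0 => 1
  | k + 1 => A (σ k) * prodMat A σ k

lemma aux_trajL_eq (A : Fin M → Matrix (Fin n) (Fin n) ℝ) (σ : ℕ → Fin M)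
    (x : Fin n → ℝ) : ∀ k : ℕ, trajL A σ x k = prodMat A σ k *ᵥ x
  | 0 => (Matrix.one_mulVec x).symm
  | k + 1 => by
    simp only [trajL, prodMat, aux_trajL_eq A σ x k, Matrix.mulVec_mulVec]

lemma aux_quadForm_conj (Q B : Matrix (Fin n) (Fin n) ℝ) (x : Fin n → ℝ) :
    quadForm (Bᵀ * Q * B) x = quadForm Q (B *ᵥ x) := by
  simp only [quadForm]
  rw [← Matrix.mulVec_mulVec, ← Matrix.mulVec_mulVec, Matrix.dotProduct_mulVec,
    Matrix.vecMul_transpose]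

lemma aux_quadForm_sum {ι : Type*} (s : Finset ι)
    (f : ι → Matrix (Fin n) (Fin n) ℝ) (x : Fin n → ℝ) :
    quadForm (∑ i ∈ s, f i) x = ∑ i ∈ s, quadForm (f i) x := by
  classical
  induction s using Finset.cons_induction with
  | empty => simp [quadForm]
  | cons a s ha ih =>
      rw [Finset.sum_cons, Finset.sum_cons, ← ih]
      simp [quadForm, Matrix.add_mulVec, dotProduct_add]

lemma aux_quadForm_smul (c : ℝ) (Q : Matrix (Fin n) (Fin n) ℝ) (x : Fin n → ℝ) :
    quadForm (c • Q) x = c * quadForm Q x := by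
  simp [quadForm, Matrix.smul_mulVec, dotProduct_smul]

lemma aux_posSemidef_smul {Q : Matrix (Fin n) (Fin n) ℝ} (hQ : Q.PosSemidef)
    {c : ℝ} (hc : 0 ≤ c) : (c • Q).PosSemidef := by
  refine Matrix.PosSemidef.of_dotProduct_mulVec_nonneg ?_ fun x => ?_
  · show (c • Q)ᴴ = c • Q
    rw [Matrix.conjTranspose_smul, hQ.1]
    simp
  · have h := hQ.dotProduct_mulVec_nonneg x
    simp only [Matrix.smul_mulVec, dotProduct_smul, smul_eq_mul]
    exact mul_nonneg hc h

end AuxLemmas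
section AuxLemmas2

variable {n M : ℕ}

lemma aux_truncCost_nonneg {l : ℕ} {Q : Matrix (Fin n) (Fin n) ℝ}
    (hQ : Q.PosSemidef) (A : Fin M → Matrix (Fin n) (Fin n) ℝ) (d : Fin M)
    (γ : Fin l → Fin M) (x : Fin n → ℝ) : 0 ≤ truncCost A Q d γ x :=
  Finset.sum_nonneg fun _ _ => aux_quadForm_nonneg hQ _

/-- The truncated cost along the first `l` letters of `σ` is the truncated
sum of the cost along `σ`. -/
lemma aux_truncCost_of_signal {l : ℕ} (A : Fin M → Matrix (Fin n) (Fin n) ℝ)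
    (Q : Matrix (Fin n) (Fin n) ℝ) (d : Fin M) (σ : ℕ → Fin M) (x : Fin n → ℝ) :
    truncCost A Q d (fun k : Fin l => σ k) x
      = ∑ k ∈ Finset.range (l + 1), quadForm Q (trajL A σ x k) := by
  refine Finset.sum_congr rfl fun k hk => ?_
  rw [Finset.mem_range, Nat.lt_succ_iff] at hk
  congr 1
  refine aux_trajL_congr A x k fun i hi => ?_
  have hil : i < l := lt_of_lt_of_le hi hk
  simp [wordExt, hil]

/-- Prefix word: trajectories agree up to time `l`. -/
lemma aux_traj_prefix {l : ℕ} (A : Fin M → Matrix (Fin n) (Fin n) ℝ)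
    (d : Fin M) (w : Fin (l + 1) → Fin M) (x : Fin n → ℝ) {k : ℕ} (hk : k ≤ l) :
    trajL A (wordExt (fun k : Fin l => w k.castSucc) d) x k
      = trajL A (wordExt w d) x k := by
  refine aux_trajL_congr A x k fun i hi => ?_
  have hil : i < l := lt_of_lt_of_le hi hk
  have hil1 : i < l + 1 := hil.trans (Nat.lt_succ_self l)
  simp only [wordExt, dif_pos hil, dif_pos hil1]
  congr 1

/-- Suffix word: the shifted trajectory. -/
lemma aux_traj_suffix {l : ℕ} (A : Fin M → Matrix (Fin n) (Fin n) ℝ)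
    (d : Fin M) (w : Fin (l + 1) → Fin M) (x : Fin n → ℝ) {k : ℕ} (hk : k ≤ l) :
    trajL A (wordExt (fun k : Fin l => w k.succ) d) (A (w 0) *ᵥ x) k
      = trajL A (wordExt w d) x (k + 1) := by
  have h1 : trajL A (wordExt w d) x 1 = A (w 0) *ᵥ x := by
    show A (wordExt w d 0) *ᵥ x = _
    have : wordExt w d 0 = w 0 := by
      simp only [wordExt, dif_pos (Nat.succ_pos l)]
      congr 1
    rw [this]
  have h2 := aux_trajL_shift A (wordExt w d) x 1 k
  rw [Nat.add_comm 1 k] at h2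
  rw [h2, h1]
  refine aux_trajL_congr A (A (w 0) *ᵥ x) k fun i hi => ?_
  have hil : i < l := lt_of_lt_of_le hi hk
  have h1i : 1 + i < l + 1 := by omega
  simp only [wordExt, dif_pos h1i, dif_pos hil]
  congr 1
  ext
  simp [Nat.add_comm]

/-- Block decay along any signal. -/
lemma aux_block_decay {l : ℕ} (A : Fin M → Matrix (Fin n) (Fin n) ℝ)
    (Q : Matrix (Fin n) (Fin n) ℝ) (η : ℕ → ℝ) (hη0 : 0 ≤ η l)
    (hη : ∀ (x : Fin n → ℝ) (σ : ℕ → Fin M),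
      quadForm Q (trajL A σ x (l + 1)) ≤ η l * quadForm Q x)
    (σ : ℕ → Fin M) (x : Fin n → ℝ) (r : ℕ) :
    ∀ j : ℕ, quadForm Q (trajL A σ x (j * (l + 1) + r))
      ≤ η l ^ j * quadForm Q (trajL A σ x r)
  | 0 => by simp
  | j + 1 => by
    have hidx : (j + 1) * (l + 1) + r = (j * (l + 1) + r) + (l + 1) := by ring
    set m := j * (l + 1) + r with hm
    have hshift := aux_trajL_shift A σ x m (l + 1)
    have hstep : quadForm Q (trajL A σ x (m + (l + 1)))
        ≤ η l * quadForm Q (trajL A σ x m) := by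
      rw [hshift]; exact hη _ _
    have hrec := aux_block_decay A Q η hη0 hη σ x r j
    calc quadForm Q (trajL A σ x ((j + 1) * (l + 1) + r))
        = quadForm Q (trajL A σ x (m + (l + 1))) := by rw [hidx]
      _ ≤ η l * quadForm Q (trajL A σ x m) := hstep
      _ ≤ η l * (η l ^ j * quadForm Q (trajL A σ x r)) :=
          mul_le_mul_of_nonneg_left hrec hη0
      _ = η l ^ (j + 1) * quadForm Q (trajL A σ x r) := by ring

end AuxLemmas2
section AuxLemmas3

variable {n M : ℕ}

lemma aux_lower {l : ℕ} (A : Fin M → Matrix (Fin n) (Fin n) ℝ)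
    (Q : Matrix (Fin n) (Fin n) ℝ) (hQ : Q.PosSemidef) (d : Fin M)
    (γ : Fin l → Fin M) (x : Fin n → ℝ) :
    ENNReal.ofReal (truncCost A Q d γ x) ≤ valueFunLin A Q x := by
  rw [valueFunLin]
  refine le_trans ?_ (le_iSup (fun σ : ℕ → Fin M =>
    ∑' k : ℕ, ENNReal.ofReal (quadForm Q (trajL A σ x k))) (wordExt γ d))
  rw [truncCost, ENNReal.ofReal_sum_of_nonneg
    (fun k _ => aux_quadForm_nonneg hQ _)]
  exact ENNReal.sum_le_tsum _

lemma aux_upper {l : ℕ} (A : Fin M → Matrix (Fin n) (Fin n) ℝ)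
    (Q : Matrix (Fin n) (Fin n) ℝ) (hQ : Q.PosSemidef) (η : ℕ → ℝ)
    (hη0 : 0 ≤ η l) (hl : η l < 1)
    (hη : ∀ (x : Fin n → ℝ) (σ : ℕ → Fin M),
      quadForm Q (trajL A σ x (l + 1)) ≤ η l * quadForm Q x)
    (d : Fin M) (x : Fin n → ℝ) (γ0 : Fin l → Fin M)
    (hmax : ∀ γ : Fin l → Fin M, truncCost A Q d γ x ≤ truncCost A Q d γ0 x) :
    valueFunLin A Q x
      ≤ ENNReal.ofReal ((1 - η l)⁻¹ * truncCost A Q d γ0 x) := by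
  have h1η : (0:ℝ) < 1 - η l := by linarith
  rw [valueFunLin]
  refine iSup_le fun σ => ?_
  set c : ℕ → ℝ := fun k => quadForm Q (trajL A σ x k) with hc_def
  have hc : ∀ k, 0 ≤ c k := fun k => aux_quadForm_nonneg hQ _
  haveI : NeZero (l + 1) := ⟨Nat.succ_ne_zero l⟩
  have h1 : ∑' k : ℕ, ENNReal.ofReal (c k)
      = ∑' p : ℕ × Fin (l + 1),
          ENNReal.ofReal (c (p.1 * (l + 1) + (p.2 : ℕ))) := by
    rw [← (Nat.divModEquiv (l + 1)).symm.tsum_eq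
      (fun k => ENNReal.ofReal (c k))]
    simp [Nat.divModEquiv]
  have h2 : ∑' p : ℕ × Fin (l + 1),
        ENNReal.ofReal (c (p.1 * (l + 1) + (p.2 : ℕ)))
      = ∑' j : ℕ, ∑' r : Fin (l + 1),
          ENNReal.ofReal (c (j * (l + 1) + (r : ℕ))) :=
    ENNReal.tsum_prod (f := fun (j : ℕ) (r : Fin (l + 1)) => ENNReal.ofReal (c (j * (l + 1) + (r : ℕ))))
  have hblock : ∀ (j : ℕ) (r : Fin (l + 1)),
      ENNReal.ofReal (c (j * (l + 1) + (r : ℕ)))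
        ≤ ENNReal.ofReal (η l) ^ j * ENNReal.ofReal (c (r : ℕ)) := by
    intro j r
    have := aux_block_decay A Q η hη0 hη σ x (r : ℕ) j
    calc ENNReal.ofReal (c (j * (l + 1) + (r : ℕ)))
        ≤ ENNReal.ofReal (η l ^ j * c (r : ℕ)) := ENNReal.ofReal_le_ofReal this
      _ = ENNReal.ofReal (η l ^ j) * ENNReal.ofReal (c (r : ℕ)) :=
          ENNReal.ofReal_mul (pow_nonneg hη0 j)
      _ = ENNReal.ofReal (η l) ^ j * ENNReal.ofReal (c (r : ℕ)) := by
          rw [ENNReal.ofReal_pow hη0]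
  have hSr : ∑' r : Fin (l + 1), ENNReal.ofReal (c (r : ℕ))
      = ENNReal.ofReal (truncCost A Q d (fun k : Fin l => σ k) x) := by
    rw [tsum_fintype, aux_truncCost_of_signal A Q d σ x,
      ENNReal.ofReal_sum_of_nonneg (fun k _ => aux_quadForm_nonneg hQ _),
      ← Fin.sum_univ_eq_sum_range]
  calc ∑' k : ℕ, ENNReal.ofReal (c k)
      = ∑' j : ℕ, ∑' r : Fin (l + 1),
          ENNReal.ofReal (c (j * (l + 1) + (r : ℕ))) := by rw [h1, h2]
    _ ≤ ∑' j : ℕ, ∑' r : Fin (l + 1),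
          ENNReal.ofReal (η l) ^ j * ENNReal.ofReal (c (r : ℕ)) :=
        ENNReal.tsum_le_tsum fun j => ENNReal.tsum_le_tsum fun r => hblock j r
    _ = (∑' j : ℕ, ENNReal.ofReal (η l) ^ j)
          * ∑' r : Fin (l + 1), ENNReal.ofReal (c (r : ℕ)) := by
        simp_rw [ENNReal.tsum_mul_left]
        rw [ENNReal.tsum_mul_right]
    _ = (1 - ENNReal.ofReal (η l))⁻¹
          * ENNReal.ofReal (truncCost A Q d (fun k : Fin l => σ k) x) := by
        rw [ENNReal.tsum_geometric, hSr]
    _ ≤ (1 - ENNReal.ofReal (η l))⁻¹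
          * ENNReal.ofReal (truncCost A Q d γ0 x) :=
        mul_le_mul_right (ENNReal.ofReal_le_ofReal (hmax _)) _
    _ = ENNReal.ofReal ((1 - η l)⁻¹ * truncCost A Q d γ0 x) := by
        have h3 : (1 : ℝ≥0∞) - ENNReal.ofReal (η l) = ENNReal.ofReal (1 - η l) := by
          rw [ENNReal.ofReal_sub 1 hη0, ENNReal.ofReal_one]
        rw [h3, ← ENNReal.ofReal_inv_of_pos h1η,
          ← ENNReal.ofReal_mul (le_of_lt (inv_pos.mpr h1η))]

end AuxLemmas3
theorem stmt_12 {n M : ℕ} (hM : 0 < M) (A : Fin M → Matrix (Fin n) (Fin n) ℝ)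
    (Q : Matrix (Fin n) (Fin n) ℝ) (hQ : Q.PosDef)
    (C ρ : ℝ) (hC : 0 ≤ C) (hρ0 : 0 ≤ ρ) (hρ1 : ρ < 1)
    (hstab : ∀ (x : Fin n → ℝ) (σ : ℕ → Fin M) (k : ℕ),
      ‖trajL A σ x k‖ ≤ C * ρ ^ k * ‖x‖)
    (η : ℕ → ℝ) (hη0 : ∀ l, 0 ≤ η l)
    (hη : ∀ (l : ℕ) (x : Fin n → ℝ) (σ : ℕ → Fin M),
      quadForm Q (trajL A σ x (l + 1)) ≤ η l * quadForm Q x)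
    (hηlim : Tendsto η atTop (nhds 0)) :
    ∃ V : (l : ℕ) → (Fin l → Fin M) → (Fin n → ℝ) → ℝ,
      (∀ l : ℕ, η l < 1 →
        -- the functions are quadratic
        (∀ γ : Fin l → Fin M, ∃ P : Matrix (Fin n) (Fin n) ℝ,
          P.PosSemidef ∧ ∀ x, V l γ x = quadForm P x) ∧
        -- path-complete inequalities on the dual De Bruijn graph H_l^T(M)
        (∀ (w : Fin (l + 1) → Fin M) (x : Fin n → ℝ),
          quadForm Q x + V l (fun k : Fin l => w k.succ) (A (w 0) *ᵥ x)
            ≤ V l (fun k : Fin l => w k.castSucc) x) ∧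
        -- sandwich bound (1 − η_l) V^l(x) ≤ J(x) ≤ V^l(x)
        (∀ x : Fin n → ℝ,
          ENNReal.ofReal ((1 - η l) * ⨆ γ : Fin l → Fin M, V l γ x)
              ≤ valueFunLin A Q x ∧
          valueFunLin A Q x ≤ ENNReal.ofReal (⨆ γ : Fin l → Fin M, V l γ x))) ∧
      -- pointwise convergence V^l → J
      (∀ x : Fin n → ℝ,
        Tendsto (fun l : ℕ => ENNReal.ofReal (⨆ γ : Fin l → Fin M, V l γ x))
          atTop (nhds (valueFunLin A Q x))) := by
  classical
  set d : Fin M := ⟨0, hM⟩ with hd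
  haveI : Nonempty (Fin M) := ⟨d⟩
  set V : (l : ℕ) → (Fin l → Fin M) → (Fin n → ℝ) → ℝ :=
    fun l γ x => (1 - η l)⁻¹ * truncCost A Q d γ x with hV
  have main : ∀ l : ℕ, η l < 1 →
      (∀ γ : Fin l → Fin M, ∃ P : Matrix (Fin n) (Fin n) ℝ,
        P.PosSemidef ∧ ∀ x, V l γ x = quadForm P x) ∧
      (∀ (w : Fin (l + 1) → Fin M) (x : Fin n → ℝ),
        quadForm Q x + V l (fun k : Fin l => w k.succ) (A (w 0) *ᵥ x)
          ≤ V l (fun k : Fin l => w k.castSucc) x) ∧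
      (∀ x : Fin n → ℝ,
        ENNReal.ofReal ((1 - η l) * ⨆ γ : Fin l → Fin M, V l γ x)
            ≤ valueFunLin A Q x ∧
        valueFunLin A Q x ≤ ENNReal.ofReal (⨆ γ : Fin l → Fin M, V l γ x)) := by
    intro l hl
    have h1η : (0:ℝ) < 1 - η l := by linarith
    have hne : (1 - η l) ≠ 0 := ne_of_gt h1η
    have hinv : (0:ℝ) ≤ (1 - η l)⁻¹ := inv_nonneg.mpr h1η.le
    refine ⟨?_, ?_, ?_⟩
    · -- quadratic
      intro γ
      set B : ℕ → Matrix (Fin n) (Fin n) ℝ := prodMat A (wordExt γ d) with hB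
      refine ⟨∑ k ∈ Finset.range (l + 1),
        (B k)ᵀ * ((1 - η l)⁻¹ • Q) * (B k), ?_, ?_⟩
      · refine Finset.sum_induction _ _ (fun a b ha hb => ha.add hb)
          Matrix.PosSemidef.zero (fun k _ => ?_)
        have h := (aux_posSemidef_smul hQ.posSemidef hinv).conjTranspose_mul_mul_same (B k)
        have hct : (B k)ᴴ = (B k)ᵀ := by
          ext i j
          simp [Matrix.conjTranspose_apply]
        rwa [hct] at h
      · intro x
        rw [aux_quadForm_sum]
        have : ∀ k, quadForm ((B k)ᵀ * ((1 - η l)⁻¹ • Q) * (B k)) x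
            = (1 - η l)⁻¹ * quadForm Q (trajL A (wordExt γ d) x k) := by
          intro k
          rw [aux_quadForm_conj, aux_quadForm_smul, aux_trajL_eq]
        simp only [this]
        rw [← Finset.mul_sum]
        rfl
    · -- path-complete inequalities
      intro w x
      set ξ : ℕ → (Fin n → ℝ) := trajL A (wordExt w d) x with hξ
      have hpre : truncCost A Q d (fun k : Fin l => w k.castSucc) x
          = ∑ k ∈ Finset.range (l + 1), quadForm Q (ξ k) := by
        refine Finset.sum_congr rfl fun k hk => ?_
        rw [Finset.mem_range, Nat.lt_succ_iff] at hk
        rw [aux_traj_prefix A d w x hk]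
      have hsuf : truncCost A Q d (fun k : Fin l => w k.succ) (A (w 0) *ᵥ x)
          = ∑ k ∈ Finset.range (l + 1), quadForm Q (ξ (k + 1)) := by
        refine Finset.sum_congr rfl fun k hk => ?_
        rw [Finset.mem_range, Nat.lt_succ_iff] at hk
        rw [aux_traj_suffix A d w x hk]
      have e1 := Finset.sum_range_succ (fun k => quadForm Q (ξ k)) (l + 1)
      have e2 := Finset.sum_range_succ' (fun k => quadForm Q (ξ k)) (l + 1)
      have hx0 : quadForm Q (ξ 0) = quadForm Q x := rfl
      have hkey : truncCost A Q d (fun k : Fin l => w k.succ) (A (w 0) *ᵥ x)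
            + quadForm Q x
          = truncCost A Q d (fun k : Fin l => w k.castSucc) x
            + quadForm Q (ξ (l + 1)) := by
        rw [hpre, hsuf]
        linarith [e1, e2, hx0]
      have hbd : quadForm Q (ξ (l + 1)) ≤ η l * quadForm Q x := hη l x _
      show quadForm Q x
          + (1 - η l)⁻¹ * truncCost A Q d (fun k : Fin l => w k.succ) (A (w 0) *ᵥ x)
          ≤ (1 - η l)⁻¹ * truncCost A Q d (fun k : Fin l => w k.castSucc) x
      have hrw : quadForm Q x
            + (1 - η l)⁻¹ * truncCost A Q d (fun k : Fin l => w k.succ) (A (w 0) *ᵥ x)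
          = (1 - η l)⁻¹ * ((1 - η l) * quadForm Q x
            + truncCost A Q d (fun k : Fin l => w k.succ) (A (w 0) *ᵥ x)) := by
        field_simp
      rw [hrw]
      exact mul_le_mul_of_nonneg_left (by linarith) hinv
    · -- sandwich
      intro x
      obtain ⟨γ0, hγ0⟩ := Finite.exists_max (fun γ : Fin l → Fin M => truncCost A Q d γ x)
      have hVmax : ∀ γ : Fin l → Fin M, V l γ x ≤ V l γ0 x := fun γ =>
        mul_le_mul_of_nonneg_left (hγ0 γ) hinv
      have hsup : (⨆ γ : Fin l → Fin M, V l γ x) = V l γ0 x :=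
        le_antisymm (ciSup_le hVmax)
          (le_ciSup (f := fun γ : Fin l → Fin M => V l γ x) (Finite.bddAbove_range _) γ0)
      constructor
      · rw [hsup]
        have hcan : (1 - η l) * V l γ0 x = truncCost A Q d γ0 x := by
          show (1 - η l) * ((1 - η l)⁻¹ * truncCost A Q d γ0 x) = _
          rw [← mul_assoc, mul_inv_cancel₀ hne, one_mul]
        rw [hcan]
        exact aux_lower A Q hQ.posSemidef d γ0 x
      · rw [hsup]
        exact aux_upper A Q hQ.posSemidef η (hη0 l) hl (hη l) d x γ0 hγ0
  refine ⟨V, main, ?_⟩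
  intro x
  have hev : ∀ᶠ l in atTop, η l < 1 := hηlim.eventually_lt_const one_pos
  obtain ⟨l0, hl0⟩ := hev.exists
  have hJne : valueFunLin A Q x ≠ ⊤ :=
    ne_top_of_le_ne_top ENNReal.ofReal_ne_top ((main l0 hl0).2.2 x).2
  set Jr : ℝ := (valueFunLin A Q x).toReal with hJr
  set S : ℕ → ℝ := fun l => ⨆ γ : Fin l → Fin M, V l γ x with hS
  have hS0 : ∀ l : ℕ, η l < 1 → 0 ≤ S l := by
    intro l hl
    refine le_ciSup_of_le (f := fun γ : Fin l → Fin M => V l γ x) (Finite.bddAbove_range _) (fun _ => d) ?_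
    exact mul_nonneg (inv_nonneg.mpr (by linarith))
      (aux_truncCost_nonneg hQ.posSemidef A d _ x)
  have hlow : ∀ᶠ l in atTop, Jr ≤ S l := by
    refine hev.mono fun l hl => ?_
    exact (ENNReal.le_ofReal_iff_toReal_le hJne (hS0 l hl)).mp ((main l hl).2.2 x).2
  have hhigh : ∀ᶠ l in atTop, S l ≤ Jr * (1 - η l)⁻¹ := by
    refine hev.mono fun l hl => ?_
    have h1η : (0:ℝ) < 1 - η l := by linarith
    have h1 : (1 - η l) * S l ≤ Jr :=
      (ENNReal.ofReal_le_iff_le_toReal hJne).mp ((main l hl).2.2 x).1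
    have h2 := mul_le_mul_of_nonneg_right h1 (inv_nonneg.mpr h1η.le)
    rwa [mul_comm (1 - η l) (S l), mul_assoc, mul_inv_cancel₀ (ne_of_gt h1η),
      mul_one] at h2
  have hR : Tendsto (fun l : ℕ => Jr * (1 - η l)⁻¹) atTop (nhds Jr) := by
    have h := (tendsto_const_nhds.sub hηlim).inv₀ (by norm_num : (1:ℝ) - 0 ≠ 0)
    have h2 := (tendsto_const_nhds (x := Jr)).mul h
    simpa using h2
  have hT : Tendsto S atTop (nhds Jr) :=
    tendsto_of_tendsto_of_tendsto_of_le_of_le' tendsto_const_nhds hR hlow hhigh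
  have hfin := (ENNReal.continuous_ofReal.tendsto Jr).comp hT
  rw [hJr, ENNReal.ofReal_toReal hJne] at hfin
  exact hfin
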